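/- Let $\bar{X}, X \in \mathbb{R}^{t \times d}$, $\varepsilon \in \mathbb{R}^t$, $\theta^* \in \mathbb{R}^d$, $\rho > 0$, and set $y = \bar{X}\theta^* + \varepsilon$, $\Omega = \rho I + X^\top X$, $\hat{\theta} = \Omega^{-1}X^\top y$. Then for every $x \in \mathbb{R}^d$: $x^\top \hat{\theta} - x^\top \theta^* \;\leq\; \|x\|_{\Omega^{-1}} \left( \|X^\top \varepsilon\|_{\Omega^{-1}} + \|\theta^*\|_2 \,\|\bar{X} - X\| + \sqrt{\rho}\,\|\theta^*\|_2 \right)$. -/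

import Mathlib

open Matrix

/-- Spectral (operator) norm of a real matrix, viewed as the operator norm of the
induced linear map between Euclidean spaces. -/
noncomputable def opNorm {n m : ℕ} (A : Matrix (Fin n) (Fin m) ℝ) : ℝ :=
  ‖LinearMap.toContinuousLinearMap (Matrix.toEuclideanLin A)‖

/-- Euclidean norm of a vector. -/
noncomputable def vecNorm {d : ℕ} (a : Fin d → ℝ) : ℝ := Real.sqrt (a ⬝ᵥ a)

/-- Weighted norm `‖a‖_Ω = sqrt (aᵀ Ω a)`. -/
noncomputable def wnorm {r : ℕ} (Ω : Matrix (Fin r) (Fin r) ℝ) (a : Fin r → ℝ) : ℝ :=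
  Real.sqrt (a ⬝ᵥ (Ω *ᵥ a))

/-- `k`-th largest singular value of a matrix, characterized as the distance (in the
spectral norm) to the set of matrices of rank `< k` (approximation numbers). -/
noncomputable def singVal {n m : ℕ} (k : ℕ) (A : Matrix (Fin n) (Fin m) ℝ) : ℝ :=
  sInf {c | ∃ B : Matrix (Fin n) (Fin m) ℝ, B.rank < k ∧ c = opNorm (A - B)}

section Helpers

lemma dotSelf_nonneg {n : ℕ} (a : Fin n → ℝ) : 0 ≤ a ⬝ᵥ a :=
  Finset.sum_nonneg fun _ _ => mul_self_nonneg _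

lemma vecNorm_nonneg {n : ℕ} (a : Fin n → ℝ) : 0 ≤ vecNorm a := Real.sqrt_nonneg _

lemma sq_vecNorm {n : ℕ} (a : Fin n → ℝ) : vecNorm a * vecNorm a = a ⬝ᵥ a :=
  Real.mul_self_sqrt (dotSelf_nonneg a)

lemma vecNorm_eq' {m : ℕ} (a : Fin m → ℝ) :
    vecNorm a = ‖(WithLp.equiv 2 (Fin m → ℝ)).symm a‖ := by
  rw [EuclideanSpace.norm_eq]
  simp [vecNorm, dotProduct, Real.norm_eq_abs, sq_abs, sq]

lemma dot_le {m : ℕ} (a b : Fin m → ℝ) : a ⬝ᵥ b ≤ vecNorm a * vecNorm b := by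
  have h := real_inner_le_norm ((WithLp.equiv 2 (Fin m → ℝ)).symm a)
    ((WithLp.equiv 2 (Fin m → ℝ)).symm b)
  rw [vecNorm_eq', vecNorm_eq']
  refine le_trans (le_of_eq ?_) h
  simp [PiLp.inner_apply, RCLike.inner_apply, dotProduct, mul_comm]

lemma vecNorm_add_le {m : ℕ} (a b : Fin m → ℝ) :
    vecNorm (a + b) ≤ vecNorm a + vecNorm b := by
  rw [vecNorm_eq', vecNorm_eq', vecNorm_eq']
  simpa using norm_add_le ((WithLp.equiv 2 (Fin m → ℝ)).symm a)
    ((WithLp.equiv 2 (Fin m → ℝ)).symm b)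

lemma vecNorm_mulVec_le {n m : ℕ} (A : Matrix (Fin n) (Fin m) ℝ) (v : Fin m → ℝ) :
    vecNorm (A *ᵥ v) ≤ opNorm A * vecNorm v := by
  rw [vecNorm_eq', vecNorm_eq']
  have h := (LinearMap.toContinuousLinearMap (Matrix.toEuclideanLin A)).le_opNorm
    ((WithLp.equiv 2 (Fin m → ℝ)).symm v)
  simpa [opNorm] using h

variable {n : ℕ} {M : Matrix (Fin n) (Fin n) ℝ}

open scoped MatrixOrder Matrix.Norms.L2Operator in
noncomputable def Matrix.PosSemidef.sqrt (_hM : M.PosSemidef) : Matrix (Fin n) (Fin n) ℝ :=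
  CFC.sqrt M

open scoped MatrixOrder Matrix.Norms.L2Operator in
theorem Matrix.PosSemidef.posSemidef_sqrt (hM : M.PosSemidef) : hM.sqrt.PosSemidef :=
  (CFC.sqrt_nonneg M).posSemidef

open scoped MatrixOrder Matrix.Norms.L2Operator in
theorem Matrix.PosSemidef.sqrt_mul_self (hM : M.PosSemidef) : hM.sqrt * hM.sqrt = M :=
  CFC.sqrt_mul_sqrt_self M hM.nonneg

lemma sqrt_transpose (hM : M.PosSemidef) : (hM.sqrt)ᵀ = hM.sqrt := by
  have h := hM.posSemidef_sqrt.isHermitian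
  simpa [Matrix.IsHermitian, Matrix.conjTranspose_eq_transpose_of_trivial] using h

lemma mulVec_sqrt_dot (hM : M.PosSemidef) (a b : Fin n → ℝ) :
    (hM.sqrt *ᵥ a) ⬝ᵥ (hM.sqrt *ᵥ b) = a ⬝ᵥ (M *ᵥ b) := by
  rw [Matrix.dotProduct_mulVec, ← Matrix.mulVec_transpose, sqrt_transpose hM,
    Matrix.mulVec_mulVec, hM.sqrt_mul_self, Matrix.dotProduct_mulVec a M b,
    ← Matrix.mulVec_transpose]
  have hT : Mᵀ = M := by simpa [Matrix.IsHermitian, Matrix.conjTranspose_eq_transpose_of_trivial] using hM.isHermitian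
  rw [hT]

lemma wnorm_eq (hM : M.PosSemidef) (a : Fin n → ℝ) :
    wnorm M a = vecNorm (hM.sqrt *ᵥ a) := by
  rw [wnorm, vecNorm, mulVec_sqrt_dot hM]

lemma quad_nonneg (hM : M.PosSemidef) (a : Fin n → ℝ) : 0 ≤ a ⬝ᵥ (M *ᵥ a) := by
  simpa using hM.dotProduct_mulVec_nonneg a

lemma sq_wnorm (hM : M.PosSemidef) (a : Fin n → ℝ) :
    wnorm M a * wnorm M a = a ⬝ᵥ (M *ᵥ a) :=
  Real.mul_self_sqrt (quad_nonneg hM a)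

lemma wnorm_nonneg (a : Fin n → ℝ) : 0 ≤ wnorm M a := Real.sqrt_nonneg _

lemma wnorm_CS (hM : M.PosSemidef) (a b : Fin n → ℝ) :
    a ⬝ᵥ (M *ᵥ b) ≤ wnorm M a * wnorm M b := by
  rw [wnorm_eq hM, wnorm_eq hM]
  calc a ⬝ᵥ (M *ᵥ b) = (hM.sqrt *ᵥ a) ⬝ᵥ (hM.sqrt *ᵥ b) := (mulVec_sqrt_dot hM a b).symm
  _ ≤ _ := dot_le _ _

lemma wnorm_add (hM : M.PosSemidef) (a b : Fin n → ℝ) :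
    wnorm M (a + b) ≤ wnorm M a + wnorm M b := by
  rw [wnorm_eq hM, wnorm_eq hM, wnorm_eq hM, Matrix.mulVec_add]
  exact vecNorm_add_le _ _

lemma wnorm_neg (a : Fin n → ℝ) : wnorm M (-a) = wnorm M a := by
  simp [wnorm, Matrix.mulVec_neg]

lemma wnorm_smul (c : ℝ) (a : Fin n → ℝ) : wnorm M (c • a) = |c| * wnorm M a := by
  rw [wnorm, wnorm, Matrix.mulVec_smul, smul_dotProduct, dotProduct_smul,
    smul_eq_mul, smul_eq_mul, show c * (c * (a ⬝ᵥ (M *ᵥ a))) = c ^ 2 * (a ⬝ᵥ (M *ᵥ a)) by ring,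
    Real.sqrt_mul (sq_nonneg c), Real.sqrt_sq_eq_abs]

lemma le_of_sq_le {s c : ℝ} (hs : 0 ≤ s) (hc : 0 ≤ c) (h : s * s ≤ c * s) : s ≤ c := by
  rcases eq_or_lt_of_le hs with h0 | h0
  · rw [← h0]; exact hc
  · exact le_of_mul_le_mul_right h h0

end Helpers

/-- pointwise confidence bound for ridge regression with errors in
variables. -/
theorem stmt_5 {t d : ℕ} (Xbar X : Matrix (Fin t) (Fin d) ℝ)
    (ε : Fin t → ℝ) (θstar : Fin d → ℝ) (ρ : ℝ) (hρ : 0 < ρ)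
    (y : Fin t → ℝ) (hy : y = Xbar *ᵥ θstar + ε)
    (Ω : Matrix (Fin d) (Fin d) ℝ)
    (hΩ : Ω = ρ • (1 : Matrix (Fin d) (Fin d) ℝ) + Xᵀ * X)
    (θhat : Fin d → ℝ) (hθhat : θhat = Ω⁻¹ *ᵥ (Xᵀ *ᵥ y)) :
    ∀ x : Fin d → ℝ,
      x ⬝ᵥ θhat - x ⬝ᵥ θstar ≤
        wnorm Ω⁻¹ x * (wnorm Ω⁻¹ (Xᵀ *ᵥ ε) + vecNorm θstar * opNorm (Xbar - X)
          + Real.sqrt ρ * vecNorm θstar) := by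
  intro x
  have hXtX : (Xᵀ * X).PosSemidef := by
    simpa [Matrix.conjTranspose_eq_transpose_of_trivial] using
      Matrix.posSemidef_conjTranspose_mul_self X
  have hΩpd : Ω.PosDef := by
    rw [hΩ]
    refine Matrix.PosDef.add_posSemidef ?_ hXtX
    rw [Matrix.smul_one_eq_diagonal]
    exact Matrix.posDef_diagonal_iff.mpr fun _ => hρ
  have hInv : Ω⁻¹.PosDef := hΩpd.inv
  have hInvS : Ω⁻¹.PosSemidef := hInv.posSemidef
  have hdet : IsUnit Ω.det := (Matrix.isUnit_iff_isUnit_det Ω).mp hΩpd.isUnit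
  have hcancel : ∀ w : Fin d → ℝ, Ω *ᵥ (Ω⁻¹ *ᵥ w) = w := fun w => by
    rw [Matrix.mulVec_mulVec, Matrix.mul_nonsing_inv _ hdet, Matrix.one_mulVec]
  have hquad : ∀ c : Fin d → ℝ,
      c ⬝ᵥ (Ω *ᵥ c) = ρ * (c ⬝ᵥ c) + (X *ᵥ c) ⬝ᵥ (X *ᵥ c) := fun c => by
    rw [hΩ, Matrix.add_mulVec, dotProduct_add, Matrix.smul_mulVec,
      Matrix.one_mulVec, dotProduct_smul, smul_eq_mul, ← Matrix.mulVec_mulVec,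
      Matrix.dotProduct_mulVec c Xᵀ, Matrix.vecMul_transpose]
  -- the core quadratic inequalities
  have hboundX : ∀ z : Fin t → ℝ, wnorm Ω⁻¹ (Xᵀ *ᵥ z) ≤ vecNorm z := by
    intro z
    set u : Fin d → ℝ := Ω⁻¹ *ᵥ (Xᵀ *ᵥ z) with hu
    set s : ℝ := wnorm Ω⁻¹ (Xᵀ *ᵥ z) with hs
    have hv : (Xᵀ *ᵥ z) ⬝ᵥ (Ω⁻¹ *ᵥ (Xᵀ *ᵥ z)) = u ⬝ᵥ (Ω *ᵥ u) := by
      rw [hu, hcancel, dotProduct_comm]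
    have hss : s * s = u ⬝ᵥ (Ω *ᵥ u) := by rw [hs, sq_wnorm hInvS, hv]
    have hXu : vecNorm (X *ᵥ u) ≤ s := by
      have h1 : (X *ᵥ u) ⬝ᵥ (X *ᵥ u) ≤ s * s := by
        rw [hss, hquad u]
        nlinarith [dotSelf_nonneg u]
      have := Real.sqrt_le_sqrt h1
      rwa [show Real.sqrt (s * s) = s from Real.sqrt_mul_self (wnorm_nonneg _)] at this
    have hzu : (Xᵀ *ᵥ z) ⬝ᵥ u = z ⬝ᵥ (X *ᵥ u) := by
      rw [Matrix.mulVec_transpose, ← Matrix.dotProduct_mulVec]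
    have hmain : s * s ≤ vecNorm z * s := by
      calc s * s = z ⬝ᵥ (X *ᵥ u) := by rw [hss, ← hv, ← hzu]
      _ ≤ vecNorm z * vecNorm (X *ᵥ u) := dot_le _ _
      _ ≤ vecNorm z * s := mul_le_mul_of_nonneg_left hXu (vecNorm_nonneg _)
    exact le_of_sq_le (wnorm_nonneg _) (vecNorm_nonneg _) hmain
  have hboundρ : Real.sqrt ρ * wnorm Ω⁻¹ θstar ≤ vecNorm θstar := by
    set u : Fin d → ℝ := Ω⁻¹ *ᵥ θstar with hu
    set s : ℝ := wnorm Ω⁻¹ θstar with hs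
    have hv : θstar ⬝ᵥ (Ω⁻¹ *ᵥ θstar) = u ⬝ᵥ (Ω *ᵥ u) := by
      rw [hu, hcancel, dotProduct_comm]
    have hss : s * s = u ⬝ᵥ (Ω *ᵥ u) := by rw [hs, sq_wnorm hInvS, hv]
    have hup : Real.sqrt ρ * vecNorm u ≤ s := by
      have h1 : ρ * (u ⬝ᵥ u) ≤ s * s := by
        rw [hss, hquad u]
        nlinarith [dotSelf_nonneg (X *ᵥ u)]
      have h2 := Real.sqrt_le_sqrt h1
      rw [Real.sqrt_mul hρ.le, show Real.sqrt (s * s) = s from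
        Real.sqrt_mul_self (wnorm_nonneg _)] at h2
      exact h2
    have hmain : (Real.sqrt ρ * s) * s ≤ vecNorm θstar * s := by
      calc (Real.sqrt ρ * s) * s = Real.sqrt ρ * (s * s) := by ring
      _ = Real.sqrt ρ * (θstar ⬝ᵥ u) := by rw [hss, ← hv]
      _ ≤ Real.sqrt ρ * (vecNorm θstar * vecNorm u) :=
          mul_le_mul_of_nonneg_left (dot_le _ _) (Real.sqrt_nonneg _)
      _ = vecNorm θstar * (Real.sqrt ρ * vecNorm u) := by ring
      _ ≤ vecNorm θstar * s := mul_le_mul_of_nonneg_left hup (vecNorm_nonneg _)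
    have hs0 : 0 ≤ s := wnorm_nonneg _
    rcases eq_or_lt_of_le hs0 with h0 | h0
    · rw [← h0, mul_zero]; exact vecNorm_nonneg _
    · exact le_of_mul_le_mul_right hmain h0
  -- the algebraic decomposition
  set z : Fin t → ℝ := (Xbar - X) *ᵥ θstar with hz
  set b : Fin d → ℝ := Xᵀ *ᵥ ε + Xᵀ *ᵥ z - ρ • θstar with hb
  have hkey : θhat - θstar = Ω⁻¹ *ᵥ b := by
    have hΩθ : Ω *ᵥ θstar = ρ • θstar + Xᵀ *ᵥ (X *ᵥ θstar) := by
      rw [hΩ, Matrix.add_mulVec, Matrix.smul_mulVec, Matrix.one_mulVec,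
        ← Matrix.mulVec_mulVec]
    have h1 : Ω *ᵥ (θhat - θstar) = b := by
      rw [Matrix.mulVec_sub, hθhat, hcancel, hy, hΩθ, hb, hz, Matrix.mulVec_add,
        Matrix.sub_mulVec, Matrix.mulVec_sub]
      abel
    rw [← h1, Matrix.mulVec_mulVec, Matrix.nonsing_inv_mul _ hdet, Matrix.one_mulVec]
  have hbnorm : wnorm Ω⁻¹ b ≤ wnorm Ω⁻¹ (Xᵀ *ᵥ ε) + vecNorm θstar * opNorm (Xbar - X)
      + Real.sqrt ρ * vecNorm θstar := by
    have t1 : wnorm Ω⁻¹ b ≤ wnorm Ω⁻¹ (Xᵀ *ᵥ ε) + wnorm Ω⁻¹ (Xᵀ *ᵥ z)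
        + wnorm Ω⁻¹ (ρ • θstar) := by
      calc wnorm Ω⁻¹ b = wnorm Ω⁻¹ (Xᵀ *ᵥ ε + Xᵀ *ᵥ z + -(ρ • θstar)) := by
            rw [hb, sub_eq_add_neg]
      _ ≤ wnorm Ω⁻¹ (Xᵀ *ᵥ ε + Xᵀ *ᵥ z) + wnorm Ω⁻¹ (-(ρ • θstar)) := wnorm_add hInvS _ _
      _ ≤ wnorm Ω⁻¹ (Xᵀ *ᵥ ε) + wnorm Ω⁻¹ (Xᵀ *ᵥ z) + wnorm Ω⁻¹ (ρ • θstar) := by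
            rw [wnorm_neg]
            exact add_le_add_left (wnorm_add hInvS _ _) _
    have t2 : wnorm Ω⁻¹ (Xᵀ *ᵥ z) ≤ vecNorm θstar * opNorm (Xbar - X) := by
      calc wnorm Ω⁻¹ (Xᵀ *ᵥ z) ≤ vecNorm z := hboundX z
      _ ≤ opNorm (Xbar - X) * vecNorm θstar := by rw [hz]; exact vecNorm_mulVec_le _ _
      _ = vecNorm θstar * opNorm (Xbar - X) := mul_comm _ _
    have t3 : wnorm Ω⁻¹ (ρ • θstar) ≤ Real.sqrt ρ * vecNorm θstar := by
      rw [wnorm_smul, abs_of_pos hρ]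
      calc ρ * wnorm Ω⁻¹ θstar = Real.sqrt ρ * (Real.sqrt ρ * wnorm Ω⁻¹ θstar) := by
            rw [← mul_assoc, Real.mul_self_sqrt hρ.le]
      _ ≤ Real.sqrt ρ * vecNorm θstar :=
            mul_le_mul_of_nonneg_left hboundρ (Real.sqrt_nonneg _)
    linarith
  calc x ⬝ᵥ θhat - x ⬝ᵥ θstar = x ⬝ᵥ (Ω⁻¹ *ᵥ b) := by
        rw [← dotProduct_sub, hkey]
  _ ≤ wnorm Ω⁻¹ x * wnorm Ω⁻¹ b := wnorm_CS hInvS x b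
  _ ≤ _ := mul_le_mul_of_nonneg_left hbnorm (wnorm_nonneg _)
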